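/- Assume Δz_{i+1/2} ≠ 0, set a = 1 - θ_i^+ and b = 1 - θ_{i+1}^-, and assume a + b > 0. Then the identity w̃_0(1 - θ_{i+1}^-) + w_1(1 - θ_i^+) = (a + b)(1 - ℒ)/4 holds, and consequently the sign-property constraint w̃_0(1 - θ_{i+1}^-) + w_1(1 - θ_i^+) ≥ 0 holds if and only if ℒ ≤ 1. (This covers Cases 2a and 3b of the SP-WENO case analysis.) -/
import Mathlib


/-- Cases 2a and 3b of the SP-WENO case analysis: with
`a = 1 - θ⁺_i`, `b = 1 - θ⁻_{i+1}`, `a + b > 0`, and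
`ℒ = 8(C₁a + C₂b)/(a + b)`, the identity
`w̃₀(1 - θ⁻_{i+1}) + w₁(1 - θ⁺_i) = (a + b)(1 - ℒ)/4` holds, and hence the
sign-property constraint holds iff `ℒ ≤ 1`. -/
theorem sp_weno_L_pos (zm z0 z1 z2 C1 C2 a b L : ℝ) (hΔ : z1 - z0 ≠ 0)
    (ha : a = 1 - (z0 - zm)/(z1 - z0)) (hb : b = 1 - (z2 - z1)/(z1 - z0))
    (hab : a + b > 0) (hL : L = 8*(C1*a + C2*b)/(a + b)) :
    (1/4 - 2*C2)*(1 - (z2 - z1)/(z1 - z0))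
        + (1/4 - 2*C1)*(1 - (z0 - zm)/(z1 - z0)) = (a + b)*(1 - L)/4 ∧
    ((1/4 - 2*C2)*(1 - (z2 - z1)/(z1 - z0))
        + (1/4 - 2*C1)*(1 - (z0 - zm)/(z1 - z0)) ≥ 0 ↔ L ≤ 1) := by
  have hab' : a + b ≠ 0 := ne_of_gt hab
  have key : (1/4 - 2*C2)*(1 - (z2 - z1)/(z1 - z0))
      + (1/4 - 2*C1)*(1 - (z0 - zm)/(z1 - z0)) = (a + b)*(1 - L)/4 := by
    rw [← ha, ← hb, hL]
    field_simp
    ring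
  refine ⟨key, ?_⟩
  rw [key]
  constructor
  · intro h
    nlinarith
  · intro h
    nlinarith
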